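/- For every i ∈ {1,…,n−1}, one has Θ(x_i^ℓ) = y_i^ℓ − τ_i^ℓ y_{i+1}^{−ℓ} in ℂ[y₁^±,…,y_n^±]#_αG. -/

import Mathlib

/-!
Common setup for the twisted graded Hecke algebra associated to the homocyclic
group `G ≅ (ℤ/ℓℤ)^{n-1}` (Gan–Highfield, "Center of twisted graded Hecke
algebras for homocyclic groups").

All indices are 0-based: the paper's `x_i, g_i, t_i, τ_i` (for `i = 1, …, n`)
correspond to index `i - 1 : Fin n` here; subscripts are taken mod `n` via the
(wrap-around) addition of `Fin n`.
-/

noncomputable section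

namespace TGHA

/-- `ζ` raised to an exponent in `ZMod ℓ` (representative taken in `{0, …, ℓ-1}`). -/
def zp (ℓ : ℕ) (ζ : ℂ) (z : ZMod ℓ) : ℂ := ζ ^ z.val

/-- Given the vector `a` of diagonal exponents of a group element
`g = diag(ζ^{a 0}, …, ζ^{a (n-1)})`, `pS n ℓ a k` is the exponent `i_k` of `g_k` when
`g` is written as `g₁^{i₁} ⋯ g_{n-1}^{i_{n-1}}`, namely the partial sum `a 0 + ⋯ + a (k-1)`. -/
def pS (n ℓ : ℕ) [NeZero n] (a : Fin n → ZMod ℓ) (k : ℕ) : ZMod ℓ :=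
  ∑ m ∈ Finset.range k, a (Fin.ofNat n m)

/-- The 2-cocycle `α : G × G → ℂˣ`,
`α(g₁^{i₁}⋯g_{n-1}^{i_{n-1}}, g₁^{j₁}⋯g_{n-1}^{j_{n-1}}) = ζ^{-i₁j₂ - i₂j₃ - ⋯ - i_{n-2}j_{n-1}}`,
expressed in terms of the vectors of diagonal exponents of the two group elements. -/
def coc (n ℓ : ℕ) [NeZero n] (ζ : ℂ) (a b : Fin n → ZMod ℓ) : ℂ :=
  zp ℓ ζ (-∑ k ∈ Finset.Icc 1 (n - 2), pS n ℓ a k * pS n ℓ b (k + 1))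

/-- The homocyclic group `G`: diagonal matrices `g = diag(ζ^{a 0}, …, ζ^{a (n-1)})` in
`SL_n(ℂ)` with `g^ℓ = 1`, identified with their vectors `a` of exponents; the condition
`det g = 1` is `∑ i, a i = 0`. Written additively. -/
def Gsub (n ℓ : ℕ) : AddSubgroup (Fin n → ZMod ℓ) where
  carrier := {a | ∑ i, a i = 0}
  zero_mem' := by simp
  add_mem' := by
    intro a b ha hb
    simp only [Set.mem_setOf_eq] at *
    simp [Finset.sum_add_distrib, ha, hb]
  neg_mem' := by
    intro a ha
    simp only [Set.mem_setOf_eq] at *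
    simp [ha]

abbrev G (n ℓ : ℕ) := ↥(Gsub n ℓ)

/-- The vector of diagonal exponents of the generator `g_i`
(`g_i x_i = ζ x_i`, `g_i x_{i+1} = ζ⁻¹ x_{i+1}`, `g_i x_j = x_j` otherwise). -/
def gvec (n ℓ : ℕ) [NeZero n] (i : Fin n) : Fin n → ZMod ℓ :=
  Pi.single i 1 - Pi.single (i + 1) 1

lemma gvec_mem (n ℓ : ℕ) [NeZero n] (i : Fin n) : gvec n ℓ i ∈ Gsub n ℓ := by
  show ∑ j, gvec n ℓ i j = 0
  simp [gvec, Finset.sum_sub_distrib]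

/-- The generator `g_i` as an element of `G`. -/
def gelt (n ℓ : ℕ) [NeZero n] (i : Fin n) : G n ℓ := ⟨gvec n ℓ i, gvec_mem n ℓ i⟩

/-- The defining relations of the twisted graded Hecke algebra `H`, as a quotient of the
free algebra on generators `x_i` (`Sum.inl i`) and `u_g`, `g ∈ G` (`Sum.inr g`): the
relations `u_g u_h = α(g,h) u_{gh}`, `u_1 = 1`, `u_g x_i = ζ^{a_i} x_i u_g` present the
crossed product `TV #_α G`, and the last two relations are the Hecke relations
`x_i x_{i+1} - x_{i+1} x_i = t_i g_i` and `x_i x_j = x_j x_i` for `|i - j| ∉ {1, n-1}`. -/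
inductive Rel (n ℓ : ℕ) [NeZero n] (ζ : ℂ) (t : Fin n → ℂ) :
    FreeAlgebra ℂ (Fin n ⊕ G n ℓ) → FreeAlgebra ℂ (Fin n ⊕ G n ℓ) → Prop
  | grp (g h : G n ℓ) :
      Rel n ℓ ζ t (FreeAlgebra.ι ℂ (Sum.inr g) * FreeAlgebra.ι ℂ (Sum.inr h))
        (coc n ℓ ζ g.1 h.1 • FreeAlgebra.ι ℂ (Sum.inr (g + h)))
  | one : Rel n ℓ ζ t (FreeAlgebra.ι ℂ (Sum.inr (0 : G n ℓ))) 1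
  | gx (g : G n ℓ) (i : Fin n) :
      Rel n ℓ ζ t (FreeAlgebra.ι ℂ (Sum.inr g) * FreeAlgebra.ι ℂ (Sum.inl i))
        (zp ℓ ζ (g.1 i) • (FreeAlgebra.ι ℂ (Sum.inl i) * FreeAlgebra.ι ℂ (Sum.inr g)))
  | hecke (i : Fin n) :
      Rel n ℓ ζ t
        (FreeAlgebra.ι ℂ (Sum.inl i) * FreeAlgebra.ι ℂ (Sum.inl (i + 1)) -
          FreeAlgebra.ι ℂ (Sum.inl (i + 1)) * FreeAlgebra.ι ℂ (Sum.inl i))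
        (t i • FreeAlgebra.ι ℂ (Sum.inr (gelt n ℓ i)))
  | commx (i j : Fin n) (h₁ : j ≠ i + 1) (h₂ : i ≠ j + 1) :
      Rel n ℓ ζ t (FreeAlgebra.ι ℂ (Sum.inl i) * FreeAlgebra.ι ℂ (Sum.inl j))
        (FreeAlgebra.ι ℂ (Sum.inl j) * FreeAlgebra.ι ℂ (Sum.inl i))

/-- The twisted graded Hecke algebra `H`. -/
abbrev H (n ℓ : ℕ) [NeZero n] (ζ : ℂ) (t : Fin n → ℂ) := RingQuot (Rel n ℓ ζ t)

/-- The image of `x_i` in `H`. -/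
def xx (n ℓ : ℕ) [NeZero n] (ζ : ℂ) (t : Fin n → ℂ) (i : Fin n) : H n ℓ ζ t :=
  RingQuot.mkAlgHom ℂ (Rel n ℓ ζ t) (FreeAlgebra.ι ℂ (Sum.inl i))

/-- The image of `g ∈ G` in `H`. -/
def ug (n ℓ : ℕ) [NeZero n] (ζ : ℂ) (t : Fin n → ℂ) (g : G n ℓ) : H n ℓ ζ t :=
  RingQuot.mkAlgHom ℂ (Rel n ℓ ζ t) (FreeAlgebra.ι ℂ (Sum.inr g))

/-- Index set for the basis `y^p u_g` of the crossed product `ℂ[y₁^±,…,y_n^±] #_α G`. -/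
abbrev M (n ℓ : ℕ) := (Fin n → ℤ) × G n ℓ

/-- `χ(g, p)`: the scalar by which `g = diag(ζ^{a 0}, …)` acts on the Laurent monomial `y^p`;
for `g = g_i` it is `ζ^{p_i - p_{i+1}}`. -/
def chi (n ℓ : ℕ) [NeZero n] (ζ : ℂ) (a : Fin n → ZMod ℓ) (p : Fin n → ℤ) : ℂ :=
  zp ℓ ζ (∑ j, a j * (p j : ZMod ℓ))

/-- Structure constants of the crossed product `ℂ[y₁^±,…,y_n^±] #_α G` with respect to its
basis: `(y^p u_g) (y^q u_h) = α(g,h) χ(g,q) y^{p+q} u_{gh}`. -/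
def sigma (n ℓ : ℕ) [NeZero n] (ζ : ℂ) (a b : M n ℓ) : ℂ :=
  coc n ℓ ζ a.2.1 b.2.1 * chi n ℓ ζ a.2.1 b.1

/-- The basis element `y^p u_g` (`a = (p, g)`) of the crossed product
`ℂ[y₁^±,…,y_n^±] #_α G`, realized faithfully as the operator of left multiplication by it
on the underlying vector space of the crossed product. -/
def Top (n ℓ : ℕ) [NeZero n] (ζ : ℂ) (a : M n ℓ) : Module.End ℂ (M n ℓ →₀ ℂ) :=
  Finsupp.lsum ℂ fun b => sigma n ℓ ζ a b • Finsupp.lsingle (a + b)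

/-- The algebra containing (the left regular realization of) the crossed product
`ℂ[y₁^±,…,y_n^±] #_α G`. -/
abbrev A (n ℓ : ℕ) := Module.End ℂ (M n ℓ →₀ ℂ)

/-- The element `u_g`, `g ∈ G`, of the crossed product. -/
def Uy (n ℓ : ℕ) [NeZero n] (ζ : ℂ) (g : G n ℓ) : A n ℓ := Top n ℓ ζ (0, g)

/-- The element `y_i` of the crossed product. -/
def Ygen (n ℓ : ℕ) [NeZero n] (ζ : ℂ) (i : Fin n) : A n ℓ := Top n ℓ ζ (Pi.single i 1, 0)

/-- The element `y_i⁻¹` of the crossed product. -/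
def Yinv (n ℓ : ℕ) [NeZero n] (ζ : ℂ) (i : Fin n) : A n ℓ := Top n ℓ ζ (-Pi.single i 1, 0)

/-- `τ_i = t_i/(ζ-1)` for `i = 1, …, n-1` and `τ_n = ζ t_n/(ζ - 1)`. -/
def tau (n : ℕ) (ζ : ℂ) (t : Fin n → ℂ) (i : Fin n) : ℂ :=
  if (i : ℕ) = n - 1 then ζ * t i / (ζ - 1) else t i / (ζ - 1)

/-- `τ̃_i = τ_i^ℓ` for `i = 1, …, n-1` and `τ̃_n = (-1)^{n(ℓ-1)} τ_n^ℓ`. -/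
def taut (n ℓ : ℕ) (ζ : ℂ) (t : Fin n → ℂ) (i : Fin n) : ℂ :=
  if (i : ℕ) = n - 1 then (-1) ^ (n * (ℓ - 1)) * tau n ζ t i ^ ℓ else tau n ζ t i ^ ℓ

/-- The index set `J`: subsets `{i₁ < ⋯ < i_k}` of `{1, …, n}` with
`|i_r - i_s| ∉ {1, n-1}`, i.e. containing no pair of (cyclically) adjacent indices. -/
def Jset (n : ℕ) [NeZero n] : Finset (Finset (Fin n)) :=
  Finset.univ.filter fun S => ∀ i ∈ S, ∀ j ∈ S, j ≠ i + 1

/-- The exponent vector `δ - ε_{i₁} - ⋯ - ε_{i_k}` for `S = {i₁, …, i_k} ∈ J`: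
the entry at `j` is `0` if some `ε_i`, `i ∈ S`, covers position `j` (i.e. `j ∈ S` or
`j - 1 ∈ S` cyclically) and `1` otherwise. -/
def expS (n : ℕ) [NeZero n] (S : Finset (Fin n)) (j : Fin n) : ℕ :=
  if j ∈ S ∨ j - 1 ∈ S then 0 else 1

/-- The ordered monomial `x₁^{p₁} ⋯ x_n^{p_n} ∈ H`. -/
def xpow (n ℓ : ℕ) [NeZero n] (ζ : ℂ) (t : Fin n → ℂ) (p : Fin n → ℕ) : H n ℓ ζ t :=
  ((List.finRange n).map fun j => xx n ℓ ζ t j ^ p j).prod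

/-- The product `g_{i₁} * ⋯ * g_{i_k} ∈ H` over `S = {i₁ < ⋯ < i_k}` (in increasing
order); since `u_g u_h = α(g,h) u_{gh}` holds in `H`, this is the `*`-product. -/
def gprodS (n ℓ : ℕ) [NeZero n] (ζ : ℂ) (t : Fin n → ℂ) (S : Finset (Fin n)) :
    H n ℓ ζ t :=
  ((S.sort (· ≤ ·)).map fun i => ug n ℓ ζ t (gelt n ℓ i)).prod

/-- The element `w = Σ_{{i₁<⋯<i_k} ∈ J} τ_{i₁} ⋯ τ_{i_k} x^{δ-ε_{i₁}-⋯-ε_{i_k}}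
g_{i₁} * ⋯ * g_{i_k}` of `H`. -/
def w (n ℓ : ℕ) [NeZero n] (ζ : ℂ) (t : Fin n → ℂ) : H n ℓ ζ t :=
  ∑ S ∈ Jset n, (∏ i ∈ S, tau n ζ t i) • (xpow n ℓ ζ t (expS n S) * gprodS n ℓ ζ t S)

/-- `ν_r = (-1)^r (ℓ/(ℓ-r)) C(ℓ-r, r)`. -/
def nu (ℓ r : ℕ) : ℂ := (-1) ^ r * ((ℓ : ℂ) / ((ℓ : ℂ) - (r : ℂ))) * (Nat.choose (ℓ - r) r : ℂ)

/-- The polynomial `F` in the variables `a_i = X (Sum.inl i)` and `b = X (Sum.inr ())`. -/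
def Fpoly (n ℓ : ℕ) [NeZero n] (ζ : ℂ) (t : Fin n → ℂ) : MvPolynomial (Fin n ⊕ Unit) ℂ :=
  (∑ S ∈ Jset n, (∏ i ∈ S, taut n ℓ ζ t i) •
      ∏ j : Fin n, MvPolynomial.X (Sum.inl j) ^ expS n S j) -
    ∑ r ∈ Finset.range (ℓ / 2 + 1),
      ((-1) ^ (n * r) * ζ ^ ((n - 2) * r) * nu ℓ r * (∏ i : Fin n, tau n ζ t i) ^ r) •
        MvPolynomial.X (Sum.inr ()) ^ (ℓ - 2 * r)

end TGHA

section Aux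

open TGHA Polynomial

variable {n ℓ : ℕ} [NeZero n] [NeZero ℓ] {ζ : ℂ}

lemma zp_add (hz : ζ ^ ℓ = 1) (x y : ZMod ℓ) :
    zp ℓ ζ (x + y) = zp ℓ ζ x * zp ℓ ζ y := by
  unfold zp
  rw [ZMod.val_add, ← pow_add]
  conv_rhs => rw [← Nat.div_add_mod (x.val + y.val) ℓ]
  rw [pow_add, pow_mul, hz, one_pow, one_mul]

lemma zp_zero : zp ℓ ζ (0 : ZMod ℓ) = 1 := by simp [zp]

lemma zp_natCast (hz : ζ ^ ℓ = 1) (m : ℕ) : zp ℓ ζ ((m : ZMod ℓ)) = ζ ^ m := by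
  unfold zp
  rw [ZMod.val_natCast]
  conv_rhs => rw [← Nat.div_add_mod m ℓ]
  rw [pow_add, pow_mul, hz, one_pow, one_mul]

lemma zp_one (hz : ζ ^ ℓ = 1) : zp ℓ ζ (1 : ZMod ℓ) = ζ := by
  simpa using zp_natCast hz 1

lemma pS_add (a b : Fin n → ZMod ℓ) (k : ℕ) :
    pS n ℓ (a + b) k = pS n ℓ a k + pS n ℓ b k := by
  simp [pS, Finset.sum_add_distrib]

lemma pS_zero (k : ℕ) : pS n ℓ (0 : Fin n → ZMod ℓ) k = 0 := by simp [pS]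

lemma pS_nsmul (m : ℕ) (a : Fin n → ZMod ℓ) (k : ℕ) :
    pS n ℓ (m • a) k = m • pS n ℓ a k := by
  simp [pS, Finset.smul_sum]

lemma coc_zero_right (a : Fin n → ZMod ℓ) : coc n ℓ ζ a 0 = 1 := by
  unfold coc
  simp [pS_zero, zp_zero]

lemma chi_zero_left (p : Fin n → ℤ) : chi n ℓ ζ (0 : Fin n → ZMod ℓ) p = 1 := by
  unfold chi
  simp [zp_zero]

/-- The exponent of `ζ` in `sigma`. -/
def ee (n ℓ : ℕ) [NeZero n] (a b : M n ℓ) : ZMod ℓ :=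
  (-∑ k ∈ Finset.Icc 1 (n - 2), pS n ℓ a.2.1 k * pS n ℓ b.2.1 (k + 1)) +
    ∑ j, a.2.1 j * ((b.1 j : ZMod ℓ))

lemma sigma_eq_zp (hz : ζ ^ ℓ = 1) (a b : M n ℓ) :
    sigma n ℓ ζ a b = zp ℓ ζ (ee n ℓ a b) := by
  unfold sigma coc chi ee
  exact (zp_add hz _ _).symm

lemma ee_cocycle (a b c : M n ℓ) :
    ee n ℓ b c + ee n ℓ a (b + c) = ee n ℓ a b + ee n ℓ (a + b) c := by
  have hab : (((a + b).2 : G n ℓ) : Fin n → ZMod ℓ) =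
      ((a.2 : G n ℓ) : Fin n → ZMod ℓ) + ((b.2 : G n ℓ) : Fin n → ZMod ℓ) := rfl
  have hbc : (b + c).1 = b.1 + c.1 := rfl
  have hbc2 : (((b + c).2 : G n ℓ) : Fin n → ZMod ℓ) =
      ((b.2 : G n ℓ) : Fin n → ZMod ℓ) + ((c.2 : G n ℓ) : Fin n → ZMod ℓ) := rfl
  unfold ee
  rw [hab, hbc, hbc2]
  simp only [pS_add, Pi.add_apply, Int.cast_add, add_mul, mul_add, Finset.sum_add_distrib]
  ring

lemma sigma_cocycle (hz : ζ ^ ℓ = 1) (a b c : M n ℓ) :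
    sigma n ℓ ζ b c * sigma n ℓ ζ a (b + c) = sigma n ℓ ζ a b * sigma n ℓ ζ (a + b) c := by
  rw [sigma_eq_zp hz, sigma_eq_zp hz, sigma_eq_zp hz, sigma_eq_zp hz, ← zp_add hz, ← zp_add hz,
    ee_cocycle]

lemma Top_single (a b : M n ℓ) (s : ℂ) :
    Top n ℓ ζ a (Finsupp.single b s) = sigma n ℓ ζ a b • Finsupp.single (a + b) s := by
  unfold TGHA.Top
  rw [Finsupp.lsum_single, LinearMap.smul_apply, Finsupp.lsingle_apply]

lemma Top_mul (hz : ζ ^ ℓ = 1) (a b : M n ℓ) :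
    Top n ℓ ζ a * Top n ℓ ζ b = sigma n ℓ ζ a b • Top n ℓ ζ (a + b) := by
  apply Finsupp.lhom_ext
  intro c s
  rw [Module.End.mul_apply, Top_single, map_smul, Top_single, LinearMap.smul_apply, Top_single,
    smul_smul, smul_smul, sigma_cocycle hz, add_assoc]

lemma Top_zero : Top n ℓ ζ (0 : M n ℓ) = 1 := by
  apply Finsupp.lhom_ext
  intro c s
  rw [Top_single, zero_add, Module.End.one_apply]
  have h : sigma n ℓ ζ (0 : M n ℓ) c = 1 := by
    unfold sigma coc chi
    simp [pS, zp]
  rw [h, one_smul]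

lemma sigma_fst (p : Fin n → ℤ) (b : M n ℓ) : sigma n ℓ ζ ((p, 0) : M n ℓ) b = 1 := by
  unfold sigma coc chi
  simp [pS, zp]

lemma Top_pow_fst (hz : ζ ^ ℓ = 1) (p : Fin n → ℤ) (m : ℕ) :
    Top n ℓ ζ ((p, 0) : M n ℓ) ^ m = Top n ℓ ζ ((m • p, 0) : M n ℓ) := by
  induction m with
  | zero =>
      rw [pow_zero, show ((0 • p, (0 : G n ℓ)) : M n ℓ) = 0 by simp, Top_zero]
  | succ m ih =>
      rw [pow_succ, ih, Top_mul hz, sigma_fst, one_smul, Prod.mk_add_mk, add_zero, ← succ_nsmul]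

lemma sum_single_mul (i : Fin n) (q : Fin n → ZMod ℓ) :
    (∑ j, (Pi.single i 1 : Fin n → ZMod ℓ) j * q j) = q i := by
  have h : ∀ j ∈ Finset.univ, (Pi.single i 1 : Fin n → ZMod ℓ) j * q j
      = if j = i then q j else 0 := by
    intro j _
    rw [Pi.single_apply, ite_mul, one_mul, zero_mul]
  rw [Finset.sum_congr rfl h, Finset.sum_ite_eq' Finset.univ i q]
  simp

lemma chi_nsmul_gvec (i : Fin n) (m : ℕ) (q : Fin n → ℤ) :
    chi n ℓ ζ (m • gvec n ℓ i) q =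
      zp ℓ ζ (m • (((q i : ZMod ℓ)) - ((q (i + 1) : ZMod ℓ)))) := by
  unfold chi
  congr 1
  simp only [Pi.smul_apply, smul_mul_assoc]
  rw [← Finset.smul_sum]
  congr 1
  simp only [gvec, Pi.sub_apply, sub_mul]
  rw [Finset.sum_sub_distrib, sum_single_mul, sum_single_mul]

lemma chi_gvec (i : Fin n) (q : Fin n → ℤ) :
    chi n ℓ ζ (gvec n ℓ i) q = zp ℓ ζ (((q i : ZMod ℓ)) - ((q (i + 1) : ZMod ℓ))) := by
  simpa using chi_nsmul_gvec (ℓ := ℓ) (ζ := ζ) i 1 q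

lemma sum_single_range (j : Fin n) (k : ℕ) (hk : k ≤ n) :
    (∑ m ∈ Finset.range k, (Pi.single j 1 : Fin n → ZMod ℓ) (Fin.ofNat n m))
      = if (j : ℕ) < k then 1 else 0 := by
  have h : ∀ m ∈ Finset.range k, (Pi.single j 1 : Fin n → ZMod ℓ) (Fin.ofNat n m)
      = if m = (j : ℕ) then 1 else 0 := by
    intro m hm
    rw [Finset.mem_range] at hm
    have hmn : m < n := lt_of_lt_of_le hm hk
    rw [Pi.single_apply]
    by_cases h : m = (j : ℕ)
    · subst h
      simp [Fin.ofNat_val_eq_self]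
    · rw [if_neg, if_neg h]
      intro hc
      apply h
      have := congrArg Fin.val hc
      rwa [Fin.val_ofNat, Nat.mod_eq_of_lt hmn] at this
  rw [Finset.sum_congr rfl h, Finset.sum_ite_eq' (Finset.range k) (j : ℕ) fun _ => (1 : ZMod ℓ)]
  simp [Finset.mem_range]

lemma pS_gvec (i : Fin n) (hi : (i : ℕ) < n - 1) (k : ℕ) (hk : k ≤ n - 1) :
    pS n ℓ (gvec n ℓ i) k = if k = (i : ℕ) + 1 then 1 else 0 := by
  have hival : ((i + 1 : Fin n) : ℕ) = (i : ℕ) + 1 := by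
    have h1 : ((1 : Fin n) : ℕ) = 1 := by
      rw [Fin.val_one']
      exact Nat.mod_eq_of_lt (by omega)
    rw [Fin.val_add, h1]
    exact Nat.mod_eq_of_lt (by omega)
  unfold pS gvec
  simp only [Pi.sub_apply]
  rw [Finset.sum_sub_distrib, sum_single_range i k (by omega),
    sum_single_range (i + 1) k (by omega), hival]
  split_ifs <;> first | omega | simp

lemma coc_nsmul_gvec (i : Fin n) (hi : (i : ℕ) < n - 1) (m : ℕ) :
    coc n ℓ ζ (m • gvec n ℓ i) (gvec n ℓ i) = 1 := by
  unfold coc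
  have h : (∑ k ∈ Finset.Icc 1 (n - 2),
      pS n ℓ (m • gvec n ℓ i) k * pS n ℓ (gvec n ℓ i) (k + 1)) = 0 := by
    apply Finset.sum_eq_zero
    intro k hk
    rw [Finset.mem_Icc] at hk
    rw [pS_nsmul, pS_gvec i hi k (by omega), pS_gvec i hi (k + 1) (by omega)]
    split_ifs <;> first | omega | simp
  rw [h, neg_zero, zp_zero]

lemma G_coe_nsmul (m : ℕ) (g : G n ℓ) :
    ((m • g : G n ℓ) : Fin n → ZMod ℓ) = m • ((g : G n ℓ) : Fin n → ZMod ℓ) := by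
  induction m with
  | zero => simp
  | succ m ih => rw [succ_nsmul, succ_nsmul, AddSubgroup.coe_add, ih]

lemma neg_pow_zeta (hl : 2 ≤ ℓ) (hζ : IsPrimitiveRoot ζ ℓ) :
    (-1 : ℂ) ^ ℓ * ζ ^ (∑ j ∈ Finset.range ℓ, j) = -1 := by
  rw [Finset.sum_range_id]
  rcases Nat.even_or_odd ℓ with he | ho
  · obtain ⟨m, hm⟩ := he
    have hm1 : 1 ≤ m := by omega
    have hzm : ζ ^ m = -1 := by
      have hp : ζ ^ (m + m) = 1 := by rw [← hm]; exact hζ.pow_eq_one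
      have h2 : (ζ ^ m - 1) * (ζ ^ m + 1) = 0 := by linear_combination hp
      rcases mul_eq_zero.mp h2 with h | h
      · exact absurd (sub_eq_zero.mp h)
          (hζ.pow_ne_one_of_pos_of_lt (by omega) (by omega))
      · exact eq_neg_of_add_eq_zero_left h
    have hdiv : ℓ * (ℓ - 1) / 2 = m * (ℓ - 1) := by
      have h3 : ℓ * (ℓ - 1) = 2 * (m * (ℓ - 1)) := by rw [hm]; ring
      rw [h3, Nat.mul_div_cancel_left _ (by norm_num : 0 < 2)]
    rw [hdiv, pow_mul, hzm, ← pow_add]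
    exact Odd.neg_one_pow ⟨ℓ - 1, by omega⟩
  · obtain ⟨k, hk⟩ := ho
    have hdiv : ℓ * (ℓ - 1) / 2 = ℓ * k := by
      have h1 : ℓ - 1 = 2 * k := by omega
      have h3 : ℓ * (ℓ - 1) = 2 * (ℓ * k) := by rw [h1]; ring
      rw [h3, Nat.mul_div_cancel_left _ (by norm_num : 0 < 2)]
    rw [hdiv, pow_mul, hζ.pow_eq_one, one_pow, mul_one]
    exact Odd.neg_one_pow ⟨k, by omega⟩

lemma prod_one_sub_zeta (hl : 2 ≤ ℓ) (hζ : IsPrimitiveRoot ζ ℓ) (w : ℂ) :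
    (∏ j ∈ Finset.range ℓ, (1 - w * ζ ^ j)) = 1 - w ^ ℓ := by
  have hz0 : ζ ≠ 0 := by
    intro h
    have h1 := hζ.pow_eq_one
    rw [h, zero_pow (show ℓ ≠ 0 by omega)] at h1
    exact zero_ne_one h1
  have key : ∀ j : ℕ, (1 - w * ζ ^ j) = (-ζ ^ j) * (w - (ζ⁻¹) ^ j) := by
    intro j
    have hj : ζ ^ j * (ζ⁻¹) ^ j = 1 := by
      rw [← mul_pow, mul_inv_cancel₀ hz0, one_pow]
    linear_combination -hj
  rw [Finset.prod_congr rfl fun j _ => key j, Finset.prod_mul_distrib]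
  have h1 : (∏ j ∈ Finset.range ℓ, (-ζ ^ j)) = -1 := by
    rw [Finset.prod_congr rfl fun (j : ℕ) _ =>
      (neg_eq_neg_one_mul (ζ ^ j) : (-ζ ^ j) = (-1) * ζ ^ j), Finset.prod_mul_distrib,
      Finset.prod_const, Finset.prod_pow_eq_pow_sum, Finset.card_range]
    exact neg_pow_zeta hl hζ
  have h2 : (∏ j ∈ Finset.range ℓ, (w - (ζ⁻¹) ^ j)) = w ^ ℓ - 1 := by
    have hinv : IsPrimitiveRoot ζ⁻¹ ℓ := hζ.inv
    have hX := X_pow_sub_C_eq_prod hinv (show 0 < ℓ by omega) (one_pow ℓ)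
    have hev := congrArg (Polynomial.eval w) hX
    simpa [Polynomial.eval_prod] using hev.symm
  rw [h1, h2]
  ring

lemma list_range_prod {Mo : Type*} [CommMonoid Mo] (f : ℕ → Mo) (m : ℕ) :
    ((List.range m).map f).prod = ∏ j ∈ Finset.range m, f j := by
  induction m with
  | zero => simp
  | succ m ih =>
      rw [List.range_succ, Finset.prod_range_succ, List.map_append, List.prod_append, ih]
      simp

lemma poly_prod_eq (hl : 2 ≤ ℓ) (hζ : IsPrimitiveRoot ζ ℓ) (c : ℂ) :
    (∏ j ∈ Finset.range ℓ, (1 - Polynomial.C (c * ζ ^ j) * Polynomial.X)) =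
      1 - Polynomial.C (c ^ ℓ) * Polynomial.X ^ ℓ := by
  apply Polynomial.funext
  intro z
  simp only [Polynomial.eval_prod, Polynomial.eval_sub, Polynomial.eval_one, Polynomial.eval_mul,
    Polynomial.eval_C, Polynomial.eval_X, Polynomial.eval_pow]
  calc (∏ j ∈ Finset.range ℓ, (1 - c * ζ ^ j * z))
      = ∏ j ∈ Finset.range ℓ, (1 - (c * z) * ζ ^ j) := by
        apply Finset.prod_congr rfl
        intro j _
        ring
    _ = 1 - (c * z) ^ ℓ := prod_one_sub_zeta hl hζ (c * z)
    _ = 1 - c ^ ℓ * z ^ ℓ := by rw [mul_pow]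

lemma one_sub_smul_mul {R : Type*} [Ring R] [Algebra ℂ R] (A C : R) (z a : ℂ)
    (h1 : C * A = z • (A * C)) : (1 - a • C) * A = A * (1 - (a * z) • C) := by
  rw [sub_mul, one_mul, mul_sub, mul_one, smul_mul_assoc, h1, smul_smul, mul_smul_comm]

lemma mul_one_sub_smul {R : Type*} [Ring R] [Algebra ℂ R] (A C : R) (a : ℂ) :
    A * (1 - a • C) = A - a • (A * C) := by
  rw [mul_sub, mul_one, mul_smul_comm]

end Aux

open TGHA in
/-- For every `i ∈ {1,…,n-1}` one has
`Θ(x_i^ℓ) = y_i^ℓ - τ_i^ℓ y_{i+1}^{-ℓ}` (with `τ_i = t_i/(ζ-1)`). -/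
theorem statement5 (n ℓ : ℕ) [NeZero n] (hn : 3 ≤ n) (hℓ : 2 ≤ ℓ)
    (ζ : ℂ) (hζ : IsPrimitiveRoot ζ ℓ) (t : Fin n → ℂ)
    (Θ : H n ℓ ζ t →ₐ[ℂ] A n ℓ)
    (hΘx : ∀ i : Fin n,
      Θ (xx n ℓ ζ t i) =
        Ygen n ℓ ζ i -
          (ζ * t i / (ζ - 1)) • (Yinv n ℓ ζ (i + 1) * Uy n ℓ ζ (gelt n ℓ i)))
    (hΘg : ∀ i : Fin n, Θ (ug n ℓ ζ t (gelt n ℓ i)) = Uy n ℓ ζ (gelt n ℓ i)) :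
    ∀ i : Fin n, (i : ℕ) < n - 1 →
      Θ (xx n ℓ ζ t i ^ ℓ) =
        Ygen n ℓ ζ i ^ ℓ - (t i / (ζ - 1)) ^ ℓ • Yinv n ℓ ζ (i + 1) ^ ℓ := by
  haveI : NeZero ℓ := ⟨by omega⟩
  intro i hi
  have hz : ζ ^ ℓ = 1 := hζ.pow_eq_one
  have hival : ((i + 1 : Fin n) : ℕ) = (i : ℕ) + 1 := by
    have h1 : ((1 : Fin n) : ℕ) = 1 := by
      rw [Fin.val_one']
      exact Nat.mod_eq_of_lt (by omega)
    rw [Fin.val_add, h1]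
    exact Nat.mod_eq_of_lt (by omega)
  have hne : (i + 1 : Fin n) ≠ i := by
    intro h
    have h2 := congrArg Fin.val h
    rw [hival] at h2
    omega
  have hne' : i ≠ i + 1 := fun h => hne h.symm
  set e₁ : Fin n → ℤ := Pi.single i 1 with he₁
  set e₂ : Fin n → ℤ := Pi.single (i + 1) 1 with he₂
  set v : Fin n → ℤ := -e₁ + -e₂ with hv
  have he₁i : e₁ i = 1 := Pi.single_eq_same i 1
  have he₁i1 : e₁ (i + 1) = 0 := Pi.single_eq_of_ne hne 1
  have he₂i : e₂ i = 0 := Pi.single_eq_of_ne hne' 1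
  have he₂i1 : e₂ (i + 1) = 1 := Pi.single_eq_same (i + 1) 1
  have hvi : v i = -1 := by rw [hv]; simp [he₁i, he₂i]
  have hvi1 : v (i + 1) = -1 := by rw [hv]; simp [he₁i1, he₂i1]
  set c' : ℂ := ζ * t i / (ζ - 1) with hc'
  set Ay : A n ℓ := TGHA.Top n ℓ ζ ((e₁, 0) : M n ℓ) with hAy
  set By : A n ℓ := TGHA.Top n ℓ ζ ((-e₂, gelt n ℓ i) : M n ℓ) with hBy
  set Cy : A n ℓ := TGHA.Top n ℓ ζ ((v, gelt n ℓ i) : M n ℓ) with hCy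
  have hgc : ((gelt n ℓ i : G n ℓ) : Fin n → ZMod ℓ) = gvec n ℓ i := rfl
  -- σ((v,g),(e₁,0)) = ζ
  have hsCA : sigma n ℓ ζ ((v, gelt n ℓ i) : M n ℓ) ((e₁, 0) : M n ℓ) = ζ := by
    show coc n ℓ ζ (gelt n ℓ i).1 (0 : G n ℓ).1 * chi n ℓ ζ (gelt n ℓ i).1 e₁ = ζ
    rw [show ((0 : G n ℓ)).1 = (0 : Fin n → ZMod ℓ) from rfl, coc_zero_right, one_mul,
      show ((gelt n ℓ i).1 : Fin n → ZMod ℓ) = gvec n ℓ i from rfl, chi_gvec, he₁i, he₁i1]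
    rw [show (((1 : ℤ) : ZMod ℓ)) - (((0 : ℤ) : ZMod ℓ)) = 1 by norm_num]
    exact zp_one hz
  -- σ((m•v, m•g),(v,g)) = 1
  have hsCC : ∀ m : ℕ, sigma n ℓ ζ ((m • v, m • gelt n ℓ i) : M n ℓ) ((v, gelt n ℓ i) : M n ℓ)
      = 1 := by
    intro m
    show coc n ℓ ζ (m • gelt n ℓ i : G n ℓ).1 (gelt n ℓ i).1
        * chi n ℓ ζ (m • gelt n ℓ i : G n ℓ).1 v = 1
    rw [show ((m • gelt n ℓ i : G n ℓ)).1 = m • gvec n ℓ i from by rw [← hgc]; exact G_coe_nsmul m _,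
      show ((gelt n ℓ i).1 : Fin n → ZMod ℓ) = gvec n ℓ i from rfl,
      coc_nsmul_gvec i hi m, one_mul, chi_nsmul_gvec i m v, hvi, hvi1]
    simp [zp_zero]
  -- products
  have hB : Yinv n ℓ ζ (i + 1) * Uy n ℓ ζ (gelt n ℓ i) = By := by
    show TGHA.Top n ℓ ζ ((-e₂, 0) : M n ℓ) * TGHA.Top n ℓ ζ ((0, gelt n ℓ i) : M n ℓ) = By
    rw [Top_mul hz, sigma_fst, one_smul, hBy, Prod.mk_add_mk, add_zero, zero_add]
  have hAC : Ay * Cy = By := by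
    rw [hAy, hCy, hBy, Top_mul hz, sigma_fst, one_smul, Prod.mk_add_mk, zero_add,
      show e₁ + v = -e₂ from by rw [hv]; abel]
  have hCA : Cy * Ay = ζ • (Ay * Cy) := by
    rw [hAC, hCy, hAy, hBy, Top_mul hz, hsCA, Prod.mk_add_mk, add_zero,
      show v + e₁ = -e₂ from by rw [hv]; abel]
  -- powers
  have hApow : ∀ m : ℕ, Ay ^ m = TGHA.Top n ℓ ζ ((m • e₁, 0) : M n ℓ) := by
    intro m; rw [hAy]; exact Top_pow_fst hz e₁ m
  have hYpow : Yinv n ℓ ζ (i + 1) ^ ℓ = TGHA.Top n ℓ ζ ((ℓ • (-e₂), 0) : M n ℓ) := by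
    show TGHA.Top n ℓ ζ ((-e₂, 0) : M n ℓ) ^ ℓ = _
    exact Top_pow_fst hz (-e₂) ℓ
  have hCpow : ∀ m : ℕ, Cy ^ m = TGHA.Top n ℓ ζ ((m • v, m • gelt n ℓ i) : M n ℓ) := by
    intro m
    induction m with
    | zero =>
        rw [pow_zero, show ((0 • v, (0 : ℕ) • gelt n ℓ i) : M n ℓ) = 0 by simp, Top_zero]
    | succ m ih =>
        rw [pow_succ, ih, hCy, Top_mul hz, hsCC m, one_smul, Prod.mk_add_mk, ← succ_nsmul,
          ← succ_nsmul]
  have hCl : Cy ^ ℓ = TGHA.Top n ℓ ζ ((ℓ • v, 0) : M n ℓ) := by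
    rw [hCpow ℓ]
    have hg0 : (ℓ • gelt n ℓ i : G n ℓ) = 0 := by
      apply Subtype.ext
      rw [show ((ℓ • gelt n ℓ i : G n ℓ)).1 = ℓ • gvec n ℓ i from by
        rw [← hgc]; exact G_coe_nsmul ℓ _]
      funext j
      simp [nsmul_eq_mul, ZMod.natCast_self]
    rw [hg0]
  have hACl : Ay ^ ℓ * Cy ^ ℓ = Yinv n ℓ ζ (i + 1) ^ ℓ := by
    rw [hApow ℓ, hCl, hYpow, Top_mul hz, sigma_fst, one_smul, Prod.mk_add_mk, add_zero,
      show ℓ • e₁ + ℓ • v = ℓ • (-e₂) from by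
        rw [← smul_add, hv]
        congr 1
        abel]
  -- shifting scalars past powers of Ay
  have hshift : ∀ a : ℂ, (1 - a • Cy) * Ay = Ay * (1 - (a * ζ) • Cy) := fun a =>
    one_sub_smul_mul Ay Cy ζ a hCA
  have hshiftm : ∀ (a : ℂ) (m : ℕ), (1 - a • Cy) * Ay ^ m = Ay ^ m * (1 - (a * ζ ^ m) • Cy) := by
    intro a m
    induction m with
    | zero => simp
    | succ m ih =>
        rw [pow_succ, ← mul_assoc, ih, mul_assoc, hshift (a * ζ ^ m),
          show a * ζ ^ m * ζ = a * ζ ^ (m + 1) from by ring, ← mul_assoc, ← pow_succ]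
  -- the main q-binomial style factorization
  have hmain : ∀ m : ℕ, (Ay * (1 - c' • Cy)) ^ m =
      Ay ^ m * (((List.range m).map fun j => (1 : A n ℓ) - (c' * ζ ^ j) • Cy).reverse).prod := by
    intro m
    induction m with
    | zero => simp
    | succ m ih =>
        rw [pow_succ', ih, List.range_succ, List.map_append, List.reverse_append]
        simp only [List.map_cons, List.map_nil, List.reverse_cons, List.reverse_nil,
          List.nil_append, List.singleton_append, List.prod_cons]
        rw [mul_assoc Ay (1 - c' • Cy), ← mul_assoc (1 - c' • Cy) (Ay ^ m), hshiftm c' m,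
          mul_assoc (Ay ^ m), ← mul_assoc Ay (Ay ^ m), ← pow_succ']
  have hL : (((List.range ℓ).map fun j => (1 : A n ℓ) - (c' * ζ ^ j) • Cy).reverse).prod
      = 1 - (c' ^ ℓ) • Cy ^ ℓ := by
    have hmap : ∀ j : ℕ, (Polynomial.aeval Cy)
        ((1 : Polynomial ℂ) - Polynomial.C (c' * ζ ^ j) * Polynomial.X)
        = 1 - (c' * ζ ^ j) • Cy := by
      intro j
      simp [Algebra.smul_def]
    calc (((List.range ℓ).map fun j => (1 : A n ℓ) - (c' * ζ ^ j) • Cy).reverse).prod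
        = (((List.range ℓ).map fun j => (Polynomial.aeval Cy)
            ((1 : Polynomial ℂ) - Polynomial.C (c' * ζ ^ j) * Polynomial.X)).reverse).prod := by
          simp only [hmap]
      _ = (Polynomial.aeval Cy) ((((List.range ℓ).map fun j =>
            (1 : Polynomial ℂ) - Polynomial.C (c' * ζ ^ j) * Polynomial.X).reverse).prod) := by
          rw [map_list_prod, List.map_reverse, List.map_map]
          rfl
      _ = (Polynomial.aeval Cy) (1 - Polynomial.C (c' ^ ℓ) * Polynomial.X ^ ℓ) := by
          rw [List.prod_reverse, list_range_prod, poly_prod_eq hℓ hζ c']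
      _ = 1 - (c' ^ ℓ) • Cy ^ ℓ := by
          simp [Algebra.smul_def]
  have hXfac : Θ (xx n ℓ ζ t i) = Ay * (1 - c' • Cy) := by
    rw [hΘx i, hB, show Ygen n ℓ ζ i = Ay from rfl, mul_one_sub_smul Ay Cy c', hAC, ← hc']
  calc Θ (xx n ℓ ζ t i ^ ℓ) = (Θ (xx n ℓ ζ t i)) ^ ℓ := map_pow Θ _ ℓ
    _ = (Ay * (1 - c' • Cy)) ^ ℓ := by rw [hXfac]
    _ = Ay ^ ℓ * (1 - (c' ^ ℓ) • Cy ^ ℓ) := by rw [hmain ℓ, hL]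
    _ = Ay ^ ℓ - (c' ^ ℓ) • (Ay ^ ℓ * Cy ^ ℓ) := by exact mul_one_sub_smul (Ay ^ ℓ) (Cy ^ ℓ) (c' ^ ℓ)
    _ = Ygen n ℓ ζ i ^ ℓ - (t i / (ζ - 1)) ^ ℓ • Yinv n ℓ ζ (i + 1) ^ ℓ := by
        rw [hACl, show Ay = Ygen n ℓ ζ i from rfl,
          show c' ^ ℓ = (t i / (ζ - 1)) ^ ℓ from by
            rw [hc', mul_div_assoc, mul_pow, hz, one_mul]]
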